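/- Let q, β > 0, 0 < α < 1 and n ∈ ℕ with n^{1-α} > 2. Then for every x ∈ ℝ, ∫_{{v ∈ ℝ : |nx - v| ≥ n^{1-α}}} Ψ(nx - v) dv < (q + 1/q)·e^{-β(n^{1-α} - 1)}. -/

import Mathlib

open MeasureTheory Filter Real

noncomputable def nu (q β x : ℝ) : ℝ :=
  (1 - q * Real.exp (-β * x)) / (1 + q * Real.exp (-β * x))

noncomputable def G (q β x : ℝ) : ℝ := (1/4) * (nu q β (x+1) - nu q β (x-1))

noncomputable def Psi (q β x : ℝ) : ℝ := (G q β x + G (1/q) β x) / 2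

open Set Topology intervalIntegral

section Aux

lemma nu_denom_pos {q : ℝ} (hq : 0 < q) (β x : ℝ) : 0 < 1 + q * Real.exp (-β * x) := by
  positivity

lemma continuous_nu {q β : ℝ} (hq : 0 < q) : Continuous (nu q β) := by
  unfold nu
  exact Continuous.div (by continuity) (by continuity) fun x => (nu_denom_pos hq β x).ne'

lemma continuous_G {q β : ℝ} (hq : 0 < q) : Continuous (G q β) := by
  unfold G
  exact continuous_const.mul
    (((continuous_nu hq).comp (by continuity)).sub ((continuous_nu hq).comp (by continuity)))

lemma continuous_Psi {q β : ℝ} (hq : 0 < q) : Continuous (Psi q β) := by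
  unfold Psi
  exact ((continuous_G hq).add (continuous_G (by positivity))).div_const 2

lemma exp_sub_exp_nonneg {β : ℝ} (hβ : 0 < β) : 0 ≤ (Real.exp β - Real.exp (-β)) / 2 := by
  have : Real.exp (-β) ≤ Real.exp β := Real.exp_le_exp.2 (by linarith)
  linarith

lemma G_eq {q β : ℝ} (hq : 0 < q) (y : ℝ) :
    G q β y = ((Real.exp β - Real.exp (-β)) / 2) * (q * Real.exp (-β*y)) /
      ((1 + q * Real.exp (-β*y) * Real.exp (-β)) * (1 + q * Real.exp (-β*y) * Real.exp β)) := by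
  have e1 : -β * (y+1) = -β*y + -β := by ring
  have e2 : -β * (y-1) = -β*y + β := by ring
  unfold G nu
  rw [e1, e2, Real.exp_add, Real.exp_add]
  have d1 : (0:ℝ) < 1 + q * (Real.exp (-β*y) * Real.exp (-β)) := by positivity
  have d2 : (0:ℝ) < 1 + q * (Real.exp (-β*y) * Real.exp β) := by positivity
  have d1' := d1.ne'
  have d2' := d2.ne'
  field_simp
  ring

lemma G_nonneg {q β : ℝ} (hq : 0 < q) (hβ : 0 < β) (y : ℝ) : 0 ≤ G q β y := by
  rw [G_eq hq]
  exact div_nonneg (mul_nonneg (exp_sub_exp_nonneg hβ) (by positivity)) (by positivity)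

lemma G_le_right {q β : ℝ} (hq : 0 < q) (hβ : 0 < β) (y : ℝ) :
    G q β y ≤ ((Real.exp β - Real.exp (-β)) / 2) * (q * Real.exp (-β*y)) := by
  rw [G_eq hq]
  apply div_le_self (mul_nonneg (exp_sub_exp_nonneg hβ) (by positivity))
  nlinarith [mul_pos (mul_pos hq (Real.exp_pos (-β*y))) (Real.exp_pos (-β)),
      mul_pos (mul_pos hq (Real.exp_pos (-β*y))) (Real.exp_pos β),
      mul_pos (mul_pos (mul_pos hq (Real.exp_pos (-β*y))) (Real.exp_pos (-β)))
        (mul_pos (mul_pos hq (Real.exp_pos (-β*y))) (Real.exp_pos β))]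

lemma G_le_left {q β : ℝ} (hq : 0 < q) (hβ : 0 < β) (y : ℝ) :
    G q β y ≤ ((Real.exp β - Real.exp (-β)) / 2) * ((1/q) * Real.exp (β*y)) := by
  rw [G_eq hq]
  have hc := exp_sub_exp_nonneg hβ
  set u := q * Real.exp (-β*y) with hu
  have hu0 : 0 < u := by positivity
  have hD : u * u ≤ (1 + u * Real.exp (-β)) * (1 + u * Real.exp β) := by
    have hee : Real.exp (-β) * Real.exp β = 1 := by rw [← Real.exp_add]; simp
    nlinarith [mul_pos hu0 (Real.exp_pos (-β)), mul_pos hu0 (Real.exp_pos β)]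
  have step1 : ((Real.exp β - Real.exp (-β)) / 2) * u /
      ((1 + u * Real.exp (-β)) * (1 + u * Real.exp β))
      ≤ ((Real.exp β - Real.exp (-β)) / 2) * u / (u * u) := by
    gcongr
  refine step1.trans (le_of_eq ?_)
  have hinv : Real.exp (-β*y) = (Real.exp (β*y))⁻¹ := by
    rw [← Real.exp_neg]; ring_nf
  rw [hu, hinv]
  have he : Real.exp (β*y) ≠ 0 := (Real.exp_pos _).ne'
  field_simp

lemma Psi_nonneg {q β : ℝ} (hq : 0 < q) (hβ : 0 < β) (y : ℝ) : 0 ≤ Psi q β y := by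
  unfold Psi
  have h1 := G_nonneg hq hβ y
  have h2 := G_nonneg (q := 1/q) (by positivity) hβ y
  linarith

lemma Psi_le_right {q β : ℝ} (hq : 0 < q) (hβ : 0 < β) (y : ℝ) :
    Psi q β y ≤ (q + 1/q) * (Real.exp β - Real.exp (-β)) / 4 * Real.exp (-β*y) := by
  unfold Psi
  have h1 := G_le_right hq hβ y
  have h2 := G_le_right (q := 1/q) (by positivity) hβ y
  have key : (q + 1/q) * (Real.exp β - Real.exp (-β)) / 4 * Real.exp (-β*y)
      = (((Real.exp β - Real.exp (-β)) / 2) * (q * Real.exp (-β*y))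
        + ((Real.exp β - Real.exp (-β)) / 2) * ((1/q) * Real.exp (-β*y))) / 2 := by ring
  rw [key]; linarith

lemma Psi_le_left {q β : ℝ} (hq : 0 < q) (hβ : 0 < β) (y : ℝ) :
    Psi q β y ≤ (q + 1/q) * (Real.exp β - Real.exp (-β)) / 4 * Real.exp (β*y) := by
  unfold Psi
  have h1 := G_le_left hq hβ y
  have h2 := G_le_left (q := 1/q) (by positivity) hβ y
  have hq' : q ≠ 0 := hq.ne'
  have key : (q + 1/q) * (Real.exp β - Real.exp (-β)) / 4 * Real.exp (β*y)
      = (((Real.exp β - Real.exp (-β)) / 2) * ((1/q) * Real.exp (β*y))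
        + ((Real.exp β - Real.exp (-β)) / 2) * ((1/(1/q)) * Real.exp (β*y))) / 2 := by
    field_simp
    ring
  rw [key]; linarith

lemma my_integral_exp_neg_mul_Ioi {b : ℝ} (hb : 0 < b) (a : ℝ) :
    ∫ x in Ioi a, Real.exp (-b*x) = Real.exp (-b*a) / b := by
  have hb' := hb.ne'
  have hd : ∀ x ∈ Ici a, HasDerivAt (fun y => -Real.exp (-b*y)/b) (Real.exp (-b*x)) x := by
    intro x _
    have h1 : HasDerivAt (fun y : ℝ => -b*y) (-b) x := by
      simpa using (hasDerivAt_id x).const_mul (-b)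
    have h2 : HasDerivAt (fun y => -(Real.exp (-b*y)/b)) _ x := (h1.exp.div_const b).neg
    convert h2 using 1
    · funext y; ring
    · rw [mul_neg, neg_div, neg_neg, mul_div_assoc, div_self hb', mul_one]
  have ht : Tendsto (fun y => -Real.exp (-b*y)/b) atTop (𝓝 0) := by
    have h0 : Tendsto (fun y : ℝ => Real.exp (-(b*y))) atTop (𝓝 0) :=
      tendsto_exp_neg_atTop_nhds_zero.comp (Tendsto.const_mul_atTop hb tendsto_id)
    have h0' : Tendsto (fun y : ℝ => Real.exp (-b*y)) atTop (𝓝 0) := by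
      simpa [neg_mul] using h0
    simpa using (h0'.neg).div_const b
  have := integral_Ioi_of_hasDerivAt_of_tendsto' hd (exp_neg_integrableOn_Ioi a hb) ht
  rw [this]; ring

lemma my_integrableOn_exp_mul_Iic {b : ℝ} (hb : 0 < b) (a : ℝ) :
    IntegrableOn (fun x => Real.exp (b*x)) (Iic a) := by
  have hb' := hb.ne'
  refine integrableOn_Iic_of_intervalIntegral_norm_bounded (Real.exp (b*a)/b) a
    (fun y => ((continuous_exp.comp (continuous_const.mul continuous_id)).intervalIntegrable y a).1)
    tendsto_id (Filter.Eventually.of_forall fun y => ?_)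
  have h1 : (∫ x in y..a, ‖Real.exp (b*x)‖) = ∫ x in y..a, Real.exp (b*x) := by
    congr 1; ext x; exact Real.norm_of_nonneg (Real.exp_pos _).le
  rw [h1]
  have h2 : (∫ x in y..a, Real.exp (b*x)) = b⁻¹ • ∫ x in b*y..b*a, Real.exp x := by
    exact integral_comp_mul_left Real.exp hb'
  rw [h2, integral_exp, smul_eq_mul]
  have := (Real.exp_pos (b*y)).le
  rw [div_eq_inv_mul]
  nlinarith [inv_pos.2 hb]

lemma my_integral_exp_mul_Iic {b : ℝ} (hb : 0 < b) (a : ℝ) :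
    ∫ x in Iic a, Real.exp (b*x) = Real.exp (b*a) / b := by
  have hb' := hb.ne'
  have hd : ∀ x ∈ Iic a, HasDerivAt (fun y => Real.exp (b*y)/b) (Real.exp (b*x)) x := by
    intro x _
    have h1 : HasDerivAt (fun y : ℝ => b*y) b x := by
      simpa using (hasDerivAt_id x).const_mul b
    have h2 : HasDerivAt (fun y => Real.exp (b*y)/b) _ x := h1.exp.div_const b
    convert h2 using 1
    rw [mul_div_assoc, div_self hb', mul_one]
  have ht : Tendsto (fun y => Real.exp (b*y)/b) atBot (𝓝 0) := by
    have h0 : Tendsto (fun y : ℝ => Real.exp (b*y)) atBot (𝓝 0) :=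
      Real.tendsto_exp_atBot.comp (Tendsto.const_mul_atBot hb tendsto_id)
    simpa using h0.div_const b
  have := integral_Iic_of_hasDerivAt_of_tendsto'
    (fun x _ => hd x (by trivial)) (my_integrableOn_exp_mul_Iic hb a) ht
  rw [this]; ring

end Aux

theorem Psi_tail_integral (q β α : ℝ) (hq : 0 < q) (hβ : 0 < β)
    (hα0 : 0 < α) (hα1 : α < 1) (n : ℕ) (hn : 2 < (n : ℝ) ^ (1 - α)) (x : ℝ) :
    (∫ v in {v : ℝ | (n : ℝ) ^ (1 - α) ≤ |(n : ℝ) * x - v|},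
        Psi q β ((n : ℝ) * x - v)) <
      (q + 1/q) * Real.exp (-β * ((n : ℝ) ^ (1 - α) - 1)) := by
  set c : ℝ := (n : ℝ) * x with hc
  set R : ℝ := (n : ℝ) ^ (1 - α) with hR
  have hR0 : 0 < R := by linarith
  set M : ℝ := (q + 1/q) * (Real.exp β - Real.exp (-β)) / 4 with hM
  have hM0 : 0 ≤ M := by
    have h := exp_sub_exp_nonneg hβ
    have hq' : 0 < q + 1/q := by positivity
    nlinarith
  set f : ℝ → ℝ := fun v => Psi q β (c - v) with hf
  have hcontf : Continuous f := (continuous_Psi hq).comp (continuous_const.sub continuous_id)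
  have hf0 : ∀ v, 0 ≤ f v := fun v => Psi_nonneg hq hβ _
  -- the set splits
  have hset : {v : ℝ | R ≤ |c - v|} = Iic (c - R) ∪ Ici (c + R) := by
    ext v
    simp only [Set.mem_setOf_eq, Set.mem_union, Set.mem_Iic, Set.mem_Ici, le_abs]
    constructor
    · rintro (h | h)
      · left; linarith
      · right; linarith
    · rintro (h | h)
      · left; linarith
      · right; linarith
  -- bounds on f
  have hboundL : ∀ v, f v ≤ M * Real.exp (-β*c) * Real.exp (β*v) := by
    intro v
    have h := Psi_le_right hq hβ (c - v)
    have : M * Real.exp (-β*(c-v)) = M * Real.exp (-β*c) * Real.exp (β*v) := by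
      rw [mul_assoc, ← Real.exp_add]; congr 2; ring
    calc f v ≤ M * Real.exp (-β*(c-v)) := h
      _ = _ := this
  have hboundR : ∀ v, f v ≤ M * Real.exp (β*c) * Real.exp (-β*v) := by
    intro v
    have h := Psi_le_left hq hβ (c - v)
    have : M * Real.exp (β*(c-v)) = M * Real.exp (β*c) * Real.exp (-β*v) := by
      rw [mul_assoc, ← Real.exp_add]; congr 2; ring
    calc f v ≤ M * Real.exp (β*(c-v)) := h
      _ = _ := this
  -- integrability
  have hIntL : IntegrableOn f (Iic (c - R)) := by
    refine Integrable.mono' ((my_integrableOn_exp_mul_Iic hβ (c-R)).const_mul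
      (M * Real.exp (-β*c))) hcontf.aestronglyMeasurable.restrict
      (Filter.Eventually.of_forall fun v => ?_)
    rw [Real.norm_of_nonneg (hf0 v)]
    simpa [mul_assoc] using hboundL v
  have hIntR : IntegrableOn f (Ici (c + R)) := by
    refine Integrable.mono' ((integrableOn_Ici_iff_integrableOn_Ioi).mpr
      ((exp_neg_integrableOn_Ioi (c+R) hβ).const_mul (M * Real.exp (β*c))))
      hcontf.aestronglyMeasurable.restrict (Filter.Eventually.of_forall fun v => ?_)
    rw [Real.norm_of_nonneg (hf0 v)]
    simpa [mul_assoc] using hboundR v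
  -- integral bounds
  have I1 : (∫ v in Iic (c - R), f v) ≤ M * Real.exp (-β*R) / β := by
    have hgint : IntegrableOn (fun v => M * Real.exp (-β*c) * Real.exp (β*v)) (Iic (c-R)) :=
      (my_integrableOn_exp_mul_Iic hβ (c-R)).const_mul _
    have h1 : (∫ v in Iic (c - R), f v)
        ≤ ∫ v in Iic (c - R), M * Real.exp (-β*c) * Real.exp (β*v) :=
      setIntegral_mono_on hIntL hgint measurableSet_Iic (fun v _ => hboundL v)
    have h2 : (∫ v in Iic (c - R), M * Real.exp (-β*c) * Real.exp (β*v))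
        = M * Real.exp (-β*c) * (Real.exp (β*(c-R))/β) := by
      rw [MeasureTheory.integral_const_mul, my_integral_exp_mul_Iic hβ]
    have h3 : Real.exp (-β*c) * Real.exp (β*(c-R)) = Real.exp (-β*R) := by
      rw [← Real.exp_add]; congr 1; ring
    calc (∫ v in Iic (c - R), f v) ≤ _ := h1
      _ = M * Real.exp (-β*c) * (Real.exp (β*(c-R))/β) := h2
      _ = M * (Real.exp (-β*c) * Real.exp (β*(c-R))) / β := by ring
      _ = M * Real.exp (-β*R) / β := by rw [h3]
  have I2 : (∫ v in Ici (c + R), f v) ≤ M * Real.exp (-β*R) / β := by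
    have hgint : IntegrableOn (fun v => M * Real.exp (β*c) * Real.exp (-β*v)) (Ici (c+R)) :=
      (integrableOn_Ici_iff_integrableOn_Ioi).mpr
        ((exp_neg_integrableOn_Ioi (c+R) hβ).const_mul _)
    have h1 : (∫ v in Ici (c + R), f v)
        ≤ ∫ v in Ici (c + R), M * Real.exp (β*c) * Real.exp (-β*v) :=
      setIntegral_mono_on hIntR hgint measurableSet_Ici (fun v _ => hboundR v)
    have h2 : (∫ v in Ici (c + R), M * Real.exp (β*c) * Real.exp (-β*v))
        = M * Real.exp (β*c) * (Real.exp (-β*(c+R))/β) := by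
      rw [integral_Ici_eq_integral_Ioi, MeasureTheory.integral_const_mul, my_integral_exp_neg_mul_Ioi hβ]
    have h3 : Real.exp (β*c) * Real.exp (-β*(c+R)) = Real.exp (-β*R) := by
      rw [← Real.exp_add]; congr 1; ring
    calc (∫ v in Ici (c + R), f v) ≤ _ := h1
      _ = M * Real.exp (β*c) * (Real.exp (-β*(c+R))/β) := h2
      _ = M * (Real.exp (β*c) * Real.exp (-β*(c+R))) / β := by ring
      _ = M * Real.exp (-β*R) / β := by rw [h3]
  -- split the integral
  have hdisj : Disjoint (Iic (c - R)) (Ici (c + R)) :=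
    Set.disjoint_left.mpr fun v hv hv' => by
      simp only [Set.mem_Iic, Set.mem_Ici] at hv hv'
      linarith
  have hsplit : (∫ v in {v : ℝ | R ≤ |c - v|}, f v)
      = (∫ v in Iic (c - R), f v) + ∫ v in Ici (c + R), f v := by
    rw [hset]
    exact setIntegral_union hdisj measurableSet_Ici hIntL hIntR
  -- final strict bound
  have hq' : 0 < q + 1/q := by positivity
  have hfac : Real.exp β - Real.exp (-β) < 2*β*Real.exp β := by
    have hne : (-(2*β)) ≠ 0 := ne_of_lt (by linarith)
    have h2 := mul_lt_mul_of_pos_left (Real.add_one_lt_exp hne) (Real.exp_pos β)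
    have h1 : Real.exp β * Real.exp (-(2*β)) = Real.exp (-β) := by
      rw [← Real.exp_add]; congr 1; ring
    nlinarith [h2, h1]
  have hstep : 2 * (M / β) < (q + 1/q) * Real.exp β := by
    have hMe : 2 * (M / β) = (q + 1/q) * (Real.exp β - Real.exp (-β)) / (2*β) := by
      rw [hM]; ring
    rw [hMe, div_lt_iff₀ (by positivity)]
    nlinarith [mul_lt_mul_of_pos_left hfac hq']
  have hE : Real.exp (-β*(R-1)) = Real.exp β * Real.exp (-β*R) := by
    rw [← Real.exp_add]; congr 1; ring
  calc (∫ v in {v : ℝ | R ≤ |c - v|}, f v)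
      = (∫ v in Iic (c - R), f v) + ∫ v in Ici (c + R), f v := hsplit
    _ ≤ M * Real.exp (-β*R) / β + M * Real.exp (-β*R) / β := add_le_add I1 I2
    _ = 2 * (M / β) * Real.exp (-β*R) := by ring
    _ < ((q + 1/q) * Real.exp β) * Real.exp (-β*R) :=
        mul_lt_mul_of_pos_right hstep (Real.exp_pos _)
    _ = (q + 1/q) * Real.exp (-β*(R-1)) := by rw [hE]; ring
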